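/- Let n ≥ 1 and for ε ∈ {+1,-1} let E_ε be the set of vectors a = (a_1,...,a_n) ∈ {+1,-1}^n with a_1⋯a_n = ε. Then in the free abelian group ℤ[ℤ^n] on the group ℤ^n (i.e. finitely supported functions ℤ^n → ℤ), the following identity holds: Σ_{(a,b) ∈ E_+ × E_+} [a+b] − Σ_{a ∈ E_+} [2a] = Σ_{(a,b) ∈ E_- × E_-} [a+b] − Σ_{a ∈ E_-} [2a], where [v] denotes the basis element of ℤ[ℤ^n] corresponding to v ∈ ℤ^n and a+b, 2a are computed componentwise in ℤ^n. -/

import Mathlib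

open Finset

/-- The sign vectors of length `n` with product of coordinates equal to `ε`. -/
def signVectors (n : ℕ) (ε : ℤ) : Finset (Fin n → ℤ) :=
  (Fintype.piFinset fun _ => ({1, -1} : Finset ℤ)).filter fun a => ∏ i, a i = ε

lemma mem_signVectors {n : ℕ} {ε : ℤ} {a : Fin n → ℤ} :
    a ∈ signVectors n ε ↔ (∀ i, a i = 1 ∨ a i = -1) ∧ ∏ i, a i = ε := by
  simp [signVectors, Fintype.mem_piFinset]

/-- The set of indices where the two components of a pair differ. -/
def diffSet {n : ℕ} (p : (Fin n → ℤ) × (Fin n → ℤ)) : Finset (Fin n) :=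
  univ.filter fun i => p.1 i ≠ p.2 i

/-- Flip both components of a pair at the first index where they differ. -/
def flipPair {n : ℕ} (p : (Fin n → ℤ) × (Fin n → ℤ)) :
    (Fin n → ℤ) × (Fin n → ℤ) :=
  if h : (diffSet p).Nonempty then
    (Function.update p.1 ((diffSet p).min' h) (-(p.1 ((diffSet p).min' h))),
     Function.update p.2 ((diffSet p).min' h) (-(p.2 ((diffSet p).min' h))))
  else p

lemma diffSet_nonempty {n : ℕ} {p : (Fin n → ℤ) × (Fin n → ℤ)} (h : p.1 ≠ p.2) :
    (diffSet p).Nonempty := by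
  obtain ⟨i, hi⟩ := Function.ne_iff.mp h
  exact ⟨i, by simp [diffSet, hi]⟩

lemma diffSet_flipPair {n : ℕ} {p : (Fin n → ℤ) × (Fin n → ℤ)} (h : (diffSet p).Nonempty) :
    diffSet (flipPair p) = diffSet p := by
  rw [flipPair, dif_pos h]
  set i₀ := (diffSet p).min' h with hi₀
  ext i
  simp only [diffSet, mem_filter, mem_univ, true_and]
  by_cases hi : i = i₀
  · subst hi
    rw [Function.update_self, Function.update_self]
    simp
  · rw [Function.update_of_ne hi, Function.update_of_ne hi]

lemma flipPair_flipPair {n : ℕ} {p : (Fin n → ℤ) × (Fin n → ℤ)} (h : (diffSet p).Nonempty) :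
    flipPair (flipPair p) = p := by
  have h2 : (diffSet (flipPair p)).Nonempty := by rw [diffSet_flipPair h]; exact h
  have hmin : (diffSet (flipPair p)).min' h2 = (diffSet p).min' h := by
    congr 1 <;> rw [diffSet_flipPair h]
  rw [flipPair, dif_pos h2, hmin]
  rw [flipPair, dif_pos h]
  ext j <;> dsimp <;> by_cases hj : j = (diffSet p).min' h <;>
    simp [hj, Function.update_of_ne]

lemma flipPair_fst_ne_snd {n : ℕ} {p : (Fin n → ℤ) × (Fin n → ℤ)} (h : p.1 ≠ p.2) :
    (flipPair p).1 ≠ (flipPair p).2 := by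
  have h1 := diffSet_nonempty h
  have := diffSet_flipPair h1
  intro hc
  have : (diffSet (flipPair p)) = ∅ := by
    ext i; simp [diffSet, hc]
  rw [diffSet_flipPair h1] at this
  obtain ⟨i, hi⟩ := h1
  simp [this] at hi

lemma prod_update_neg {n : ℕ} (a : Fin n → ℤ) (i₀ : Fin n) :
    ∏ i, Function.update a i₀ (-(a i₀)) i = -∏ i, a i := by
  rw [Finset.prod_update_of_mem (mem_univ i₀)]
  rw [Finset.sdiff_singleton_eq_erase, ← Finset.prod_erase_mul univ a (mem_univ i₀)]
  ring

lemma flipPair_add {n : ℕ} {p : (Fin n → ℤ) × (Fin n → ℤ)}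
    (ha : ∀ i, p.1 i = 1 ∨ p.1 i = -1) (hb : ∀ i, p.2 i = 1 ∨ p.2 i = -1)
    (h : (diffSet p).Nonempty) :
    (flipPair p).1 + (flipPair p).2 = p.1 + p.2 := by
  rw [flipPair, dif_pos h]
  set i₀ := (diffSet p).min' h with hi₀
  have hd : p.1 i₀ ≠ p.2 i₀ := by
    have := (diffSet p).min'_mem h
    rw [← hi₀] at this
    simpa [diffSet] using this
  have hsum : p.1 i₀ + p.2 i₀ = 0 := by
    rcases ha i₀ with h1 | h1 <;> rcases hb i₀ with h2 | h2 <;>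
      simp [h1, h2] at hd ⊢
  funext j
  by_cases hj : j = i₀
  · subst hj
    simp only [Pi.add_apply, Function.update_self]
    linarith
  · simp [Function.update_of_ne hj]

lemma update_neg_mem {n : ℕ} {ε : ℤ} {a : Fin n → ℤ} (ha : a ∈ signVectors n ε)
    (i₀ : Fin n) : Function.update a i₀ (-(a i₀)) ∈ signVectors n (-ε) := by
  rw [mem_signVectors] at ha ⊢
  refine ⟨fun i => ?_, ?_⟩
  · by_cases hi : i = i₀
    · subst hi
      rw [Function.update_self]
      rcases ha.1 i with h | h <;> simp [h]
    · rw [Function.update_of_ne hi]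
      exact ha.1 i
  · rw [prod_update_neg, ha.2]

lemma flipPair_mem {n : ℕ} {ε : ℤ} {p : (Fin n → ℤ) × (Fin n → ℤ)}
    (hp : p ∈ (signVectors n ε ×ˢ signVectors n ε).filter fun q => q.1 ≠ q.2) :
    flipPair p ∈ (signVectors n (-ε) ×ˢ signVectors n (-ε)).filter fun q => q.1 ≠ q.2 := by
  rw [mem_filter, mem_product] at hp
  obtain ⟨⟨h1, h2⟩, hne⟩ := hp
  have hD := diffSet_nonempty hne
  have hflip := flipPair_fst_ne_snd hne
  rw [mem_filter, mem_product, flipPair, dif_pos hD]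
  rw [flipPair, dif_pos hD] at hflip
  exact ⟨⟨update_neg_mem h1 _, update_neg_mem h2 _⟩, hflip⟩

lemma diag_sum (n : ℕ) (ε : ℤ) :
    ∑ p ∈ (signVectors n ε ×ˢ signVectors n ε).filter (fun q => q.1 = q.2),
      (Finsupp.single (p.1 + p.2) 1 : (Fin n → ℤ) →₀ ℤ)
    = ∑ a ∈ signVectors n ε, (Finsupp.single (a + a) 1 : (Fin n → ℤ) →₀ ℤ) := by
  apply Finset.sum_nbij' (fun p => p.1) (fun a => (a, a))
  · intro p hp
    rw [mem_filter, mem_product] at hp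
    exact hp.1.1
  · intro a ha
    rw [mem_filter, mem_product]
    exact ⟨⟨ha, ha⟩, rfl⟩
  · intro p hp
    rw [mem_filter] at hp
    exact Prod.ext rfl hp.2
  · intro a _; rfl
  · intro p hp
    rw [mem_filter] at hp
    rw [← hp.2]

theorem half_spin_alt_square_identity (n : ℕ) (hn : 1 ≤ n) :
    (∑ a ∈ signVectors n 1, ∑ b ∈ signVectors n 1,
        (Finsupp.single (a + b) 1 : (Fin n → ℤ) →₀ ℤ))
      - ∑ a ∈ signVectors n 1, (Finsupp.single (a + a) 1 : (Fin n → ℤ) →₀ ℤ)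
    = (∑ a ∈ signVectors n (-1), ∑ b ∈ signVectors n (-1),
        (Finsupp.single (a + b) 1 : (Fin n → ℤ) →₀ ℤ))
      - ∑ a ∈ signVectors n (-1), (Finsupp.single (a + a) 1 : (Fin n → ℤ) →₀ ℤ) := by
  have key : ∀ ε : ℤ,
      (∑ a ∈ signVectors n ε, ∑ b ∈ signVectors n ε,
        (Finsupp.single (a + b) 1 : (Fin n → ℤ) →₀ ℤ))
      - ∑ a ∈ signVectors n ε, (Finsupp.single (a + a) 1 : (Fin n → ℤ) →₀ ℤ)
      = ∑ p ∈ (signVectors n ε ×ˢ signVectors n ε).filter (fun q => q.1 ≠ q.2),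
          (Finsupp.single (p.1 + p.2) 1 : (Fin n → ℤ) →₀ ℤ) := by
    intro ε
    rw [← Finset.sum_product']
    rw [← Finset.sum_filter_add_sum_filter_not (signVectors n ε ×ˢ signVectors n ε)
      (fun q => q.1 = q.2)]
    rw [diag_sum]
    abel
  rw [key 1, key (-1)]
  apply Finset.sum_nbij' flipPair flipPair
  · intro p hp
    simpa using flipPair_mem (ε := 1) hp
  · intro p hp
    have := flipPair_mem (ε := -1) hp
    simpa using this
  · intro p hp
    rw [mem_filter] at hp
    exact flipPair_flipPair (diffSet_nonempty hp.2)
  · intro p hp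
    rw [mem_filter] at hp
    exact flipPair_flipPair (diffSet_nonempty hp.2)
  · intro p hp
    rw [mem_filter, mem_product] at hp
    obtain ⟨⟨h1, h2⟩, hne⟩ := hp
    rw [mem_signVectors] at h1 h2
    rw [flipPair_add h1.1 h2.1 (diffSet_nonempty hne)]
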